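/- Let G be a nontrivial abelian group of exponent 2 generated by an element a of order 2 (G = ⟨a⟩ ≅ ℤ/2). Then the system of equations {x_1² = a, x_{n+1}² = x_n for all n ≥ 1} over G has no solution in any finite group containing G: for every finite group H containing an element a of order 2, there is no sequence (x_n) in H with x_1² = a and x_{n+1}² = x_n for all n. -/

import Mathlib

/-- The system `{x₁² = a, x_{n+1}² = x_n}` over `⟨a⟩ ≅ ℤ/2` has no solution
in any finite group containing an element `a` of order 2. -/
theorem infinite_system_unsolvable_in_finite_groups
    {H : Type*} [Group H] [Finite H] (a : H) (ha : orderOf a = 2) :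
    ¬ ∃ x : ℕ → H, x 0 ^ 2 = a ∧ ∀ n, x (n + 1) ^ 2 = x n := by
  rintro ⟨x, h0, hs⟩
  have ha1 : a ≠ 1 := by
    intro h; rw [h, orderOf_one] at ha; omega
  have key : ∀ n, x n ^ 2 ^ (n + 1) = a := by
    intro n
    induction n with
    | zero => simpa using h0
    | succ n ih =>
      calc x (n + 1) ^ 2 ^ (n + 2) = (x (n + 1) ^ 2) ^ 2 ^ (n + 1) := by
            rw [← pow_mul, pow_succ, mul_comm]
        _ = a := by rw [hs n, ih]
  have hord : ∀ n, orderOf (x n) = 2 ^ (n + 2) := by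
    intro n
    have h1 : x n ^ 2 ^ (n + 2) = 1 := by
      have : x n ^ 2 ^ (n + 2) = a ^ 2 := by
        rw [← key n, ← pow_mul, pow_succ, mul_comm]
      rw [this, ← ha, pow_orderOf_eq_one]
    have hdvd : orderOf (x n) ∣ 2 ^ (n + 2) := orderOf_dvd_of_pow_eq_one h1
    obtain ⟨k, hk, he⟩ := (Nat.dvd_prime_pow Nat.prime_two).mp hdvd
    have hk2 : k = n + 2 := by
      by_contra hne
      have hkle : k ≤ n + 1 := by omega
      have : x n ^ 2 ^ (n + 1) = 1 := by
        have : orderOf (x n) ∣ 2 ^ (n + 1) := he ▸ pow_dvd_pow 2 hkle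
        exact orderOf_dvd_iff_pow_eq_one.mp this
      exact ha1 (by rw [← key n, this])
    rw [he, hk2]
  have := Finite.exists_max (fun h : H => orderOf h)
  have hle : ∀ n, orderOf (x n) ≤ Nat.card H := fun n => Nat.le_of_dvd Nat.card_pos (orderOf_dvd_natCard _)
  have hbig : ∀ n, 2 ^ (n + 2) ≤ Nat.card H := fun n => hord n ▸ hle n
  have := hbig (Nat.card H)
  have := Nat.lt_two_pow_self (n := Nat.card H)
  have : Nat.card H < 2 ^ (Nat.card H + 2) :=
    lt_of_lt_of_le this (Nat.pow_le_pow_right (by norm_num) (by omega))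
  omega
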